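/- Let n ≥ 1 and m ≥ 2. In the group Z_n(D_{Z_m}), define γ_j = h_{j-1}⋯h_1 u h_1⋯h_{j-1} for 1 ≤ j ≤ n (so γ_1 = u), and define θ_n = γ_n γ_{n-1} ⋯ γ_1. Then θ_n lies in the center of Z_n(D_{Z_m}), i.e. θ_n commutes with every element of Z_n(D_{Z_m}). -/

import Mathlib

namespace Stmt13

/-- Generators of `Z_n(D_{Z_m})`: `some i` is `h_{i+1}` for `i : Fin (n-1)`, `none` is `u`. -/
abbrev Gen (n : ℕ) := Option (Fin (n - 1))

def H {n : ℕ} (i : Fin (n - 1)) : FreeGroup (Gen n) := FreeGroup.of (some i)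

def U {n : ℕ} : FreeGroup (Gen n) := FreeGroup.of none

/-- Defining relations of `Z_n(D_{Z_m})`. -/
def zrels (n m : ℕ) : Set (FreeGroup (Gen n)) :=
  {r | r = U ^ m
    ∨ (∃ i j : Fin (n - 1), (i : ℕ) + 1 = (j : ℕ) ∧
        r = H i * H j * H i * (H j * H i * H j)⁻¹)
    ∨ (∃ i j : Fin (n - 1), (i : ℕ) + 2 ≤ (j : ℕ) ∧
        r = H i * H j * (H j * H i)⁻¹)
    ∨ (∃ i : Fin (n - 1), 1 ≤ (i : ℕ) ∧ r = U * H i * (H i * U)⁻¹)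
    ∨ (∃ i : Fin (n - 1), (i : ℕ) = 0 ∧
        r = (H i * U * H i) * U * (U * (H i * U * H i))⁻¹)}

/-- The orbifold braid group `Z_n(D_{Z_m})`. -/
abbrev Z (n m : ℕ) := PresentedGroup (zrels n m)

/-- `h_j` (1-based) as an element of `Z_n(D_{Z_m})`; equal to `1` when out of range. -/
def hh (n m : ℕ) (j : ℕ) : Z n m :=
  if hj : j - 1 < n - 1 then PresentedGroup.of (some ⟨j - 1, hj⟩) else 1

def uu (n m : ℕ) : Z n m := PresentedGroup.of none

/-- `γ_j = h_{j-1} ⋯ h_1 · u · h_1 ⋯ h_{j-1}`. -/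
def γ (n m : ℕ) (j : ℕ) : Z n m :=
  (((List.range (j - 1)).map (fun k => hh n m (k + 1))).reverse).prod * uu n m *
    ((List.range (j - 1)).map (fun k => hh n m (k + 1))).prod

/-- `θ_n = γ_n γ_{n-1} ⋯ γ_1`. -/
def θ (n m : ℕ) : Z n m :=
  (((List.range n).map (fun k => γ n m (k + 1))).reverse).prod

/-! ### Auxiliary lemmas -/

section Aux

variable {n m : ℕ}

lemma rel_one {r : FreeGroup (Gen n)} (hr : r ∈ zrels n m) :
    PresentedGroup.mk (zrels n m) r = 1 :=
  (QuotientGroup.eq_one_iff r).mpr (Subgroup.subset_normalClosure hr)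

lemma mk_of (x : Gen n) :
    PresentedGroup.mk (zrels n m) (FreeGroup.of x) = PresentedGroup.of x := rfl

lemma hh_eq (j : ℕ) (h1 : 1 ≤ j) (h2 : j ≤ n - 1) :
    hh n m j = PresentedGroup.of (some ⟨j - 1, by omega⟩) :=
  dif_pos (by omega)

lemma hh_one (j : ℕ) (hj : n ≤ j) : hh n m j = 1 :=
  dif_neg (by omega)

/-- braid relation -/
lemma braid (j : ℕ) (h1 : 1 ≤ j) (h2 : j + 1 ≤ n - 1) :
    hh n m j * hh n m (j + 1) * hh n m j = hh n m (j + 1) * hh n m j * hh n m (j + 1) := by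
  have hi : j - 1 < n - 1 := by omega
  have hj : j < n - 1 := by omega
  have h := rel_one (n := n) (m := m)
    (Or.inr (Or.inl ⟨⟨j - 1, hi⟩, ⟨j, hj⟩, by simp; omega, rfl⟩))
  rw [hh_eq j h1 (by omega), hh_eq (j + 1) (by omega) h2]
  simp only [H, map_mul, map_inv, mk_of, mul_inv_eq_one] at h
  simpa using h

/-- far commutation -/
lemma far_comm (i j : ℕ) (h1 : 1 ≤ i) (h2 : i + 2 ≤ j) :
    Commute (hh n m i) (hh n m j) := by
  rcases le_or_gt j (n - 1) with hle | hgt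
  · have hi : i - 1 < n - 1 := by omega
    have hj : j - 1 < n - 1 := by omega
    have h := rel_one (n := n) (m := m)
      (Or.inr (Or.inr (Or.inl ⟨⟨i - 1, hi⟩, ⟨j - 1, hj⟩, by simp; omega, rfl⟩)))
    rw [hh_eq i h1 (by omega), hh_eq j (by omega) hle]
    simp only [H, map_mul, map_inv, mk_of, mul_inv_eq_one] at h
    exact h
  · rw [hh_one j (by omega)]
    exact Commute.one_right _

/-- `u` commutes with `h_i` for `i ≥ 2` -/
lemma u_comm_h (i : ℕ) (h1 : 2 ≤ i) : Commute (uu n m) (hh n m i) := by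
  rcases le_or_gt i (n - 1) with hle | hgt
  · have hi : i - 1 < n - 1 := by omega
    have h := rel_one (n := n) (m := m)
      (Or.inr (Or.inr (Or.inr (Or.inl ⟨⟨i - 1, hi⟩, by simp; omega, rfl⟩))))
    rw [hh_eq i (by omega) hle]
    simp only [H, U, map_mul, map_inv, mk_of, mul_inv_eq_one] at h
    exact h
  · rw [hh_one i (by omega)]
    exact Commute.one_right _

/-- the orbifold relation -/
lemma orb_rel :
    hh n m 1 * uu n m * hh n m 1 * uu n m = uu n m * (hh n m 1 * uu n m * hh n m 1) := by
  rcases le_or_gt 1 (n - 1) with hle | hgt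
  · have hi : (0 : ℕ) < n - 1 := by omega
    have h := rel_one (n := n) (m := m)
      (Or.inr (Or.inr (Or.inr (Or.inr ⟨⟨0, hi⟩, rfl, rfl⟩))))
    rw [hh_eq 1 le_rfl hle]
    simp only [H, U, map_mul, map_inv, mk_of, mul_inv_eq_one] at h
    exact h
  · rw [hh_one 1 (by omega)]
    group

/-- ascending product `h_1 ⋯ h_j` -/
def A (n m j : ℕ) : Z n m := ((List.range j).map (fun k => hh n m (k + 1))).prod

/-- descending product `h_j ⋯ h_1` -/
def Ar (n m j : ℕ) : Z n m := (((List.range j).map (fun k => hh n m (k + 1))).reverse).prod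

@[simp] lemma A_zero : A n m 0 = 1 := rfl

@[simp] lemma Ar_zero : Ar n m 0 = 1 := rfl

lemma A_succ (j : ℕ) : A n m (j + 1) = A n m j * hh n m (j + 1) := by
  simp [A, List.range_succ]

lemma Ar_succ (j : ℕ) : Ar n m (j + 1) = hh n m (j + 1) * Ar n m j := by
  simp [Ar, List.range_succ]

lemma commute_A {x : Z n m} {j : ℕ} (hx : ∀ k, 1 ≤ k → k ≤ j → Commute x (hh n m k)) :
    Commute x (A n m j) := by
  refine Commute.list_prod_right _ _ fun y hy => ?_
  simp only [List.mem_map, List.mem_range] at hy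
  obtain ⟨k, hk, rfl⟩ := hy
  exact hx (k + 1) (by omega) (by omega)

lemma commute_Ar {x : Z n m} {j : ℕ} (hx : ∀ k, 1 ≤ k → k ≤ j → Commute x (hh n m k)) :
    Commute x (Ar n m j) := by
  refine Commute.list_prod_right _ _ fun y hy => ?_
  simp only [List.mem_reverse, List.mem_map, List.mem_range] at hy
  obtain ⟨k, hk, rfl⟩ := hy
  exact hx (k + 1) (by omega) (by omega)

lemma γ_eq (j : ℕ) : γ n m j = Ar n m (j - 1) * uu n m * A n m (j - 1) := rfl

@[simp] lemma γ_one : γ n m 1 = uu n m := by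
  simp [γ_eq]

lemma γ_succ (j : ℕ) (hj : 1 ≤ j) :
    γ n m (j + 1) = hh n m j * γ n m j * hh n m j := by
  have hA : A n m j = A n m (j - 1) * hh n m j := by
    conv_lhs => rw [show j = (j - 1) + 1 by omega]
    rw [A_succ, show j - 1 + 1 = j by omega]
  have hAr : Ar n m j = hh n m j * Ar n m (j - 1) := by
    conv_lhs => rw [show j = (j - 1) + 1 by omega]
    rw [Ar_succ, show j - 1 + 1 = j by omega]
  rw [γ_eq (j + 1), γ_eq j]
  simp only [Nat.add_sub_cancel, hA, hAr]
  group


/-- contextual version of a two-factor identity -/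
lemma ctx {G : Type*} [Group G] {a b c d : G} (h : a * b = c * d) :
    ∀ x : G, a * (b * x) = c * (d * x) := fun x => by
  rw [← mul_assoc, h, mul_assoc]

/-- shift lemma for descending products -/
lemma shiftL (i j : ℕ) (h1 : 1 ≤ i) (h2 : i + 1 ≤ j) (h3 : j ≤ n - 1) :
    hh n m i * Ar n m j = Ar n m j * hh n m (i + 1) := by
  induction j, h2 using Nat.le_induction with
  | base =>
    have hAri : Ar n m i = hh n m i * Ar n m (i - 1) := by
      conv_lhs => rw [show i = (i - 1) + 1 by omega]
      rw [Ar_succ, show i - 1 + 1 = i by omega]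
    have hc : Commute (hh n m (i + 1)) (Ar n m (i - 1)) :=
      commute_Ar fun k hk1 hk2 => (far_comm k (i + 1) hk1 (by omega)).symm
    have br3 : ∀ x : Z n m, hh n m i * (hh n m (i + 1) * (hh n m i * x)) =
        hh n m (i + 1) * (hh n m i * (hh n m (i + 1) * x)) := by
      intro x
      rw [← mul_assoc, ← mul_assoc, braid (n := n) (m := m) i h1 h3, mul_assoc, mul_assoc]
    rw [Ar_succ, hAri]
    simp only [mul_assoc]
    rw [br3, hc.eq]
  | succ j hij ih =>
    have hc : Commute (hh n m i) (hh n m (j + 1)) := far_comm i (j + 1) h1 (by omega)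
    rw [Ar_succ]
    simp only [mul_assoc]
    rw [ctx hc.eq, ih (by omega)]

/-- shift lemma for ascending products -/
lemma shiftR (i j : ℕ) (h1 : 1 ≤ i) (h2 : i + 1 ≤ j) (h3 : j ≤ n - 1) :
    hh n m (i + 1) * A n m j = A n m j * hh n m i := by
  induction j, h2 using Nat.le_induction with
  | base =>
    have hAi : A n m i = A n m (i - 1) * hh n m i := by
      conv_lhs => rw [show i = (i - 1) + 1 by omega]
      rw [A_succ, show i - 1 + 1 = i by omega]
    have hc : Commute (hh n m (i + 1)) (A n m (i - 1)) :=
      commute_A fun k hk1 hk2 => (far_comm k (i + 1) hk1 (by omega)).symm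
    have br2 := braid (n := n) (m := m) i h1 h3
    simp only [mul_assoc] at br2
    rw [A_succ, hAi]
    simp only [mul_assoc]
    rw [ctx hc.eq, ← br2]
  | succ j hij ih =>
    have hc : Commute (hh n m i) (hh n m (j + 1)) := far_comm i (j + 1) h1 (by omega)
    rw [A_succ]
    simp only [mul_assoc]
    rw [ctx (ih (by omega)), hc.eq]

/-- `h_i` commutes with `γ_j` for `j < i` -/
lemma comm_low (i j : ℕ) (hj : 1 ≤ j) (hij : j + 1 ≤ i) :
    Commute (hh n m i) (γ n m j) := by
  rw [γ_eq]
  refine Commute.mul_right (Commute.mul_right ?_ ?_) ?_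
  · exact commute_Ar fun k hk1 hk2 => (far_comm k i hk1 (by omega)).symm
  · exact (u_comm_h i (by omega)).symm
  · exact commute_A fun k hk1 hk2 => (far_comm k i hk1 (by omega)).symm

/-- `h_i` commutes with `γ_j` for `j ≥ i + 2` -/
lemma comm_high (i j : ℕ) (h1 : 1 ≤ i) (h2 : i + 2 ≤ j) (h3 : j ≤ n) :
    Commute (hh n m i) (γ n m j) := by
  have hL : hh n m i * Ar n m (j - 1) = Ar n m (j - 1) * hh n m (i + 1) :=
    shiftL i (j - 1) h1 (by omega) (by omega)
  have hU : hh n m (i + 1) * uu n m = uu n m * hh n m (i + 1) :=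
    (u_comm_h (i + 1) (by omega)).symm.eq
  have hR : hh n m (i + 1) * A n m (j - 1) = A n m (j - 1) * hh n m i :=
    shiftR i (j - 1) h1 (by omega) (by omega)
  unfold Commute SemiconjBy
  rw [γ_eq]
  simp only [mul_assoc]
  rw [ctx hL, ctx hU, hR]

/-- `u` commutes with every `γ_j` -/
lemma u_comm_γ (j : ℕ) (hj : 1 ≤ j) : Commute (uu n m) (γ n m j) := by
  induction j, hj using Nat.le_induction with
  | base => simp
  | succ j hj ih =>
    rw [γ_succ j hj]
    rcases eq_or_lt_of_le hj with rfl | hj2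
    · simp only [γ_one]
      unfold Commute SemiconjBy
      exact orb_rel.symm
    · have h2j : 2 ≤ j := hj2
      exact Commute.mul_right (Commute.mul_right (u_comm_h j h2j) ih) (u_comm_h j h2j)

/-- generic group computation used in the key induction -/
lemma key_step {G : Type*} [Group G] (a b c : G)
    (br : a * b * a = b * a * b) (bc : b * c = c * b)
    (ih : a * (c * a * c) = c * a * c * a) :
    b * (a * c * a * b * (a * c * a)) = a * c * a * b * (a * c * a) * b := by
  have br' : ∀ x : G, a * (b * (a * x)) = b * (a * (b * x)) := by
    intro x; rw [← mul_assoc, ← mul_assoc, br, mul_assoc, mul_assoc]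
  have br'' : a * (b * a) = b * (a * b) := by
    rw [← mul_assoc, br, mul_assoc]
  have bc' : ∀ x : G, b * (c * x) = c * (b * x) := ctx bc
  have cb' : ∀ x : G, c * (b * x) = b * (c * x) := fun x => (bc' x).symm
  have ih' : ∀ x : G, a * (c * (a * (c * x))) = c * (a * (c * (a * x))) := by
    intro x
    have h : (a * (c * a * c)) * x = (c * a * c * a) * x := by rw [ih]
    simpa [mul_assoc] using h
  simp only [mul_assoc]
  calc b * (a * (c * (a * (b * (a * (c * a))))))
      = b * (a * (c * (b * (a * (b * (c * a)))))) := by rw [br' (c * a)]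
    _ = b * (a * (b * (c * (a * (b * (c * a)))))) := by
        rw [cb' (a * (b * (c * a)))]
    _ = b * (a * (b * (c * (a * (c * (b * a)))))) := by rw [bc' a]
    _ = a * (b * (a * (c * (a * (c * (b * a)))))) := by
        rw [← br' (c * (a * (c * (b * a))))]
    _ = a * (b * (c * (a * (c * (a * (b * a)))))) := by rw [ih' (b * a)]
    _ = a * (c * (b * (a * (c * (a * (b * a)))))) := by
        rw [bc' (a * (c * (a * (b * a))))]
    _ = a * (c * (b * (a * (c * (b * (a * b)))))) := by rw [br'']
    _ = a * (c * (b * (a * (b * (c * (a * b)))))) := by rw [cb' (a * b)]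
    _ = a * (c * (a * (b * (a * (c * (a * b)))))) := by rw [← br' (c * (a * b))]

/-- key commutation: `h_j` commutes with `γ_j h_j γ_j` -/
lemma key (j : ℕ) (h1 : 1 ≤ j) (h2 : j ≤ n - 1) :
    Commute (hh n m j) (γ n m j * hh n m j * γ n m j) := by
  induction j, h1 using Nat.le_induction with
  | base =>
    simp only [γ_one]
    unfold Commute SemiconjBy
    calc hh n m 1 * (uu n m * hh n m 1 * uu n m)
        = hh n m 1 * uu n m * hh n m 1 * uu n m := by group
      _ = uu n m * (hh n m 1 * uu n m * hh n m 1) := orb_rel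
      _ = uu n m * hh n m 1 * uu n m * hh n m 1 := by group
  | succ j hj ih =>
    have hbr := braid (n := n) (m := m) j hj h2
    have hbc : hh n m (j + 1) * γ n m j = γ n m j * hh n m (j + 1) :=
      (comm_low (j + 1) j hj (by omega)).eq
    have hih := (ih (by omega)).eq
    rw [γ_succ j hj]
    unfold Commute SemiconjBy
    exact key_step (hh n m j) (hh n m (j + 1)) (γ n m j) hbr hbc hih

/-- `h_i` commutes with `γ_{i+1} γ_i` -/
lemma comm_pair (i : ℕ) (h1 : 1 ≤ i) (h2 : i ≤ n - 1) :
    Commute (hh n m i) (γ n m (i + 1) * γ n m i) := by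
  have hk := (key (n := n) (m := m) i h1 h2).eq
  unfold Commute SemiconjBy
  rw [γ_succ i h1]
  calc hh n m i * (hh n m i * γ n m i * hh n m i * γ n m i)
      = hh n m i * (hh n m i * (γ n m i * hh n m i * γ n m i)) := by group
    _ = hh n m i * (γ n m i * hh n m i * γ n m i * hh n m i) := by rw [hk]
    _ = hh n m i * γ n m i * hh n m i * γ n m i * hh n m i := by group

/-- partial products `Θ_k = γ_k ⋯ γ_1` -/
def Θ (n m k : ℕ) : Z n m := (((List.range k).map (fun t => γ n m (t + 1))).reverse).prod

@[simp] lemma Θ_zero : Θ n m 0 = 1 := rfl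

lemma Θ_succ (k : ℕ) : Θ n m (k + 1) = γ n m (k + 1) * Θ n m k := by
  simp [Θ, List.range_succ]

lemma θ_eq : θ n m = Θ n m n := rfl

lemma u_comm_Θ (k : ℕ) : Commute (uu n m) (Θ n m k) := by
  induction k with
  | zero => exact Commute.one_right _
  | succ k ih => rw [Θ_succ]; exact Commute.mul_right (u_comm_γ (k + 1) (by omega)) ih

lemma h_comm_Θ (i : ℕ) (h1 : 1 ≤ i) (h2 : i ≤ n - 1) :
    ∀ k, k ≤ n → k ≠ i → Commute (hh n m i) (Θ n m k) := by
  intro k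
  induction k using Nat.strong_induction_on with
  | _ k ihk =>
    intro hkn hki
    match k with
    | 0 => exact Commute.one_right _
    | (j + 1) =>
      rcases lt_trichotomy (j + 1) i with hlt | heq | hgt
      · rw [Θ_succ]
        exact Commute.mul_right (comm_low i (j + 1) (by omega) (by omega))
          (ihk j (by omega) (by omega) (by omega))
      · omega
      · rcases eq_or_lt_of_le (Nat.succ_le_of_lt hgt) with heq2 | hgt2
        · -- j + 1 = i + 1, i.e. j = i
          have hji : j = i := by omega
          subst hji
          rw [Θ_succ, show j = (j - 1) + 1 by omega, Θ_succ,
            show j - 1 + 1 = j by omega, ← mul_assoc]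
          exact Commute.mul_right (comm_pair j h1 h2)
            (ihk (j - 1) (by omega) (by omega) (by omega))
        · rw [Θ_succ]
          exact Commute.mul_right (comm_high i (j + 1) h1 (by omega) hkn)
            (ihk j (by omega) (by omega) (by omega))

lemma comm_gen (x : Gen n) : Commute (PresentedGroup.of (rels := zrels n m) x) (θ n m) := by
  rw [θ_eq]
  match x with
  | none => exact u_comm_Θ n
  | some i =>
    have hi : (i : ℕ) < n - 1 := i.isLt
    have h : PresentedGroup.of (rels := zrels n m) (some i) = hh n m ((i : ℕ) + 1) := by
      rw [hh_eq ((i : ℕ) + 1) (by omega) (by omega)]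
      congr 1
    rw [h]
    exact h_comm_Θ ((i : ℕ) + 1) (by omega) (by omega) n (le_refl n) (by omega)

end Aux

theorem stmt_13 (n m : ℕ) (hn : 1 ≤ n) (hm : 2 ≤ m) :
    θ n m ∈ Subgroup.center (Z n m) := by
  rw [Subgroup.mem_center_iff]
  intro g
  have hg : g ∈ Subgroup.closure (Set.range (PresentedGroup.of : Gen n → Z n m)) := by
    rw [PresentedGroup.closure_range_of]; trivial
  have hc : Commute g (θ n m) := by
    refine Subgroup.closure_induction (p := fun g _ => Commute g (θ n m)) ?_ ?_ ?_ ?_ hg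
    · rintro x ⟨y, rfl⟩
      exact comm_gen y
    · exact Commute.one_left _
    · exact fun x y _ _ hx hy => Commute.mul_left hx hy
    · exact fun x _ hx => Commute.inv_left hx
  exact hc.eq

end Stmt13
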